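/- Let (X_i)_{i ∈ I} be a family of topological spaces each having at least two points, with I nonempty, and let 𝓕 be a proper filter on I (∅ ∉ 𝓕). Then the product ∏_{i ∈ I} X_i with the 𝓕-topology is resolvable: there exist two disjoint subsets of ∏_{i ∈ I} X_i, each dense in the 𝓕-topology. -/

import Mathlib

open Set TopologicalSpace Topology Filter

/-- The `𝓕`-topology on `∏ i, X i` determined by a filter `F` on `I`: the topology
generated by the boxes `∏ i, U i` (each `U i` open) whose set of distinguished
indices `{i | U i = univ}` belongs to `F`. -/
def FTopology {I : Type*} (X : I → Type*) [∀ i, TopologicalSpace (X i)]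
    (F : Filter I) : TopologicalSpace (∀ i, X i) :=
  TopologicalSpace.generateFrom
    {S | ∃ U : ∀ i, Set (X i), (∀ i, IsOpen (U i)) ∧ {i | U i = Set.univ} ∈ F ∧
      S = Set.pi Set.univ U}

/-- If `I` is nonempty, each `X i` has at least two points, and `𝓕` is a proper
filter on `I` (`∅ ∉ 𝓕`), then the product with the `𝓕`-topology is resolvable:
it has two disjoint subsets, each dense in the `𝓕`-topology. -/
theorem fTopology_resolvable {I : Type*} [Nonempty I] (X : I → Type*)
    [∀ i, TopologicalSpace (X i)] [∀ i, Nontrivial (X i)]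
    (F : Filter I) (hproper : (∅ : Set I) ∉ F) :
    ∃ D E : Set (∀ i, X i), Disjoint D E ∧
      @Dense (∀ i, X i) (FTopology X F) D ∧ @Dense (∀ i, X i) (FTopology X F) E := by
  classical
  obtain ⟨a, b, hab⟩ : ∃ a b : ∀ i, X i, ∀ i, a i ≠ b i := by
    have h := fun i => exists_pair_ne (X i)
    choose a b hab using h
    exact ⟨a, b, hab⟩
  have key : ∀ (O : Set (∀ i, X i)),
      TopologicalSpace.GenerateOpen
        {S | ∃ U : ∀ i, Set (X i), (∀ i, IsOpen (U i)) ∧ {i | U i = Set.univ} ∈ F ∧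
          S = Set.pi Set.univ U} O →
      ∀ x ∈ O, ∃ W : ∀ i, Set (X i), {i | W i = Set.univ} ∈ F ∧
        x ∈ Set.pi Set.univ W ∧ Set.pi Set.univ W ⊆ O := by
    intro O hO
    induction hO with
    | basic S hS =>
      rintro x hx
      obtain ⟨U, _, hU, rfl⟩ := hS
      exact ⟨U, hU, hx, subset_rfl⟩
    | univ =>
      intro x _
      exact ⟨fun _ => Set.univ, Filter.univ_mem' (fun i => rfl), by simp, by simp⟩
    | inter O₁ O₂ h₁ h₂ ih₁ ih₂ =>
      intro x hx
      obtain ⟨W₁, hW₁, hx₁, hs₁⟩ := ih₁ x hx.1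
      obtain ⟨W₂, hW₂, hx₂, hs₂⟩ := ih₂ x hx.2
      refine ⟨fun i => W₁ i ∩ W₂ i, ?_, ?_, ?_⟩
      · filter_upwards [hW₁, hW₂] with i h1 h2
        show W₁ i ∩ W₂ i = Set.univ
        rw [h1, h2, Set.univ_inter]
      · intro i _
        exact ⟨hx₁ i trivial, hx₂ i trivial⟩
      · intro y hy
        exact ⟨hs₁ fun i _ => (hy i trivial).1, hs₂ fun i _ => (hy i trivial).2⟩
    | sUnion S hS ih =>
      rintro x ⟨T, hT, hx⟩
      obtain ⟨W, h1, h2, h3⟩ := ih T hT x hx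
      exact ⟨W, h1, h2, h3.trans (Set.subset_sUnion_of_mem hT)⟩
  have dense_of : ∀ c : ∀ i, X i,
      @Dense (∀ i, X i) (FTopology X F) {f | {i | f i = c i} ∈ F} := by
    intro c
    rw [@dense_iff_inter_open _ (FTopology X F)]
    rintro O hO ⟨x, hx⟩
    obtain ⟨W, hWF, hxW, hWO⟩ := key O hO x hx
    refine ⟨fun i => if W i = Set.univ then c i else x i, hWO ?_, ?_⟩
    · intro i _
      by_cases h : W i = Set.univ
      · simp [h]
      · simpa [h] using hxW i trivial
    · refine Filter.mem_of_superset hWF (fun i hi => ?_)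
      simp only [Set.mem_setOf_eq] at hi ⊢
      simp [hi]
  refine ⟨{f | {i | f i = a i} ∈ F}, {f | {i | f i = b i} ∈ F}, ?_, dense_of a, dense_of b⟩
  rw [Set.disjoint_left]
  intro f hfD hfE
  apply hproper
  have hmem : {i | f i = a i} ∩ {i | f i = b i} ∈ F := Filter.inter_mem hfD hfE
  have : {i | f i = a i} ∩ {i | f i = b i} = (∅ : Set I) := by
    ext i
    simp only [Set.mem_inter_iff, Set.mem_setOf_eq, Set.mem_empty_iff_false, iff_false, not_and]
    intro h1 h2
    exact hab i (h1 ▸ h2)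
  rwa [this] at hmem
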